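/- There exist a rational point 𝐧 ∈ 𝐒¹_III ∩ ℚ³ and a continuous bijection Φ : ℝ → 𝐒¹_III ∖ {𝐧} such that Φ maps ℚ onto (𝐒¹_III ∩ ℚ³) ∖ {𝐧} and, for every ξ ∈ ℝ ∖ ℚ, L_{(ℝ,ℚ)}(ξ) = √2 · L_{(𝐒¹_III, 𝐒¹_III∩ℚ³)}(Φ(ξ)). -/

import Mathlib

open Filter
open scoped ENNReal

/-- The Lagrange number of `P` with respect to the set `Z` of "rational points" with
height function `H`: the limsup, along the cofinite filter on `Z`, of
`1 / (H z * dist P z)`. -/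
noncomputable def lagrangeNumber {X : Type*} [MetricSpace X] (Z : Set X) (H : X → ℝ)
    (P : X) : ℝ≥0∞ :=
  Filter.limsup (fun z : Z => ENNReal.ofReal (1 / (H z * dist P (z : X)))) Filter.cofinite

/-- The set `ℚ ⊆ ℝ`. -/
def ratQ : Set ℝ := {x | ∃ q : ℚ, x = (q : ℝ)}

/-- The height function on `ℚ ⊆ ℝ`: `H(p/q) = q²` for `p/q` in lowest terms, `q ≥ 1`. -/
noncomputable def heightQ (x : ℝ) : ℝ :=
  letI := Classical.dec (∃ q : ℚ, x = (q : ℝ))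
  if h : ∃ q : ℚ, x = (q : ℝ) then ((h.choose.den : ℝ)) ^ 2 else 1

/-- Points of `ℝ^l` with all coordinates rational. -/
def ratPts (l : ℕ) : Set (EuclideanSpace ℝ (Fin l)) := {v | ∀ i, ∃ q : ℚ, v i = (q : ℝ)}

/-- The height of a rational point of a sphere: writing it as `𝐩/q` with `𝐩 ∈ ℤ^l`,
`q ≥ 1`, `gcd(p₁,…,p_l,q) = 1`, the height is `q`, which equals the lcm of the
denominators of the rational coordinates. -/
noncomputable def heightVec {l : ℕ} (v : EuclideanSpace ℝ (Fin l)) : ℝ :=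
  letI := Classical.dec (∀ i, ∃ q : ℚ, v i = (q : ℝ))
  if h : ∀ i, ∃ q : ℚ, v i = (q : ℝ) then
    ((Finset.univ.lcm fun i => (h i).choose.den : ℕ) : ℝ)
  else 1

/-- The circle `𝐒¹_III = {(x₀,x₁,x₂) ∈ ℝ³ : x₀+x₁+x₂ = 1, x₀²+x₁²+x₂² = 1}`. -/
def S1III : Set (EuclideanSpace ℝ (Fin 3)) :=
  {v | v 0 + v 1 + v 2 = 1 ∧ v 0 ^ 2 + v 1 ^ 2 + v 2 ^ 2 = 1}

/-- Theorem 1.1(c): there exist a rational point `𝐧 ∈ 𝐒¹_III ∩ ℚ³` and a continuous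
bijection `Φ : ℝ → 𝐒¹_III ∖ {𝐧}` mapping `ℚ` onto `(𝐒¹_III ∩ ℚ³) ∖ {𝐧}` such that
`L_(ℝ,ℚ)(ξ) = √2 · L_(𝐒¹_III, 𝐒¹_III∩ℚ³)(Φ ξ)` for all `ξ ∈ ℝ ∖ ℚ`. -/

noncomputable def Phi (t : ℝ) : EuclideanSpace ℝ (Fin 3) :=
  (WithLp.equiv 2 (Fin 3 → ℝ)).symm ![-t/(t^2+t+1), (1+t)/(t^2+t+1), (t^2+t)/(t^2+t+1)]

noncomputable def nPt : EuclideanSpace ℝ (Fin 3) :=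
  (WithLp.equiv 2 (Fin 3 → ℝ)).symm ![0, 0, 1]

lemma Phi_apply0 (t : ℝ) : Phi t 0 = -t/(t^2+t+1) := rfl
lemma Phi_apply1 (t : ℝ) : Phi t 1 = (1+t)/(t^2+t+1) := rfl
lemma Phi_apply2 (t : ℝ) : Phi t 2 = (t^2+t)/(t^2+t+1) := rfl
lemma nPt_apply0 : nPt 0 = 0 := rfl
lemma nPt_apply1 : nPt 1 = 0 := rfl
lemma nPt_apply2 : nPt 2 = 1 := rfl

lemma D_pos (t : ℝ) : 0 < t^2+t+1 := by nlinarith [sq_nonneg (t+1), sq_nonneg t]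

lemma euclid_ext {v w : EuclideanSpace ℝ (Fin 3)} (h : ∀ i, v i = w i) : v = w := PiLp.ext h

lemma Phi_mem (t : ℝ) : Phi t ∈ S1III := by
  have h := (D_pos t).ne'
  have h' : t * (t + 1) + 1 ≠ 0 := (by nlinarith [D_pos t] : 0 < t * (t + 1) + 1).ne'
  constructor <;>
  · rw [Phi_apply0, Phi_apply1, Phi_apply2]
    field_simp
    ring

lemma Phi_ne_nPt (t : ℝ) : Phi t ≠ nPt := by
  intro h
  have h2 : Phi t 2 = nPt 2 := by rw [h]
  rw [Phi_apply2, nPt_apply2, div_eq_one_iff_eq (D_pos t).ne'] at h2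
  linarith

lemma nPt_mem : nPt ∈ S1III := by
  constructor <;> rw [nPt_apply0, nPt_apply1, nPt_apply2] <;> norm_num

lemma range_Phi : Set.range Phi = S1III \ {nPt} := by
  apply Set.eq_of_subset_of_subset
  · rintro _ ⟨t, rfl⟩
    exact ⟨Phi_mem t, Phi_ne_nPt t⟩
  · rintro v ⟨⟨e1, e2⟩, hv⟩
    have hv2 : v 2 ≠ 1 := by
      intro h2
      apply hv
      have h01 : v 0 + v 1 = 0 := by linarith
      have h0 : v 0 = 0 := by nlinarith [sq_nonneg (v 0), sq_nonneg (v 1)]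
      have h1 : v 1 = 0 := by linarith
      apply euclid_ext
      intro i
      fin_cases i <;>
        simp only [nPt_apply0, nPt_apply1, nPt_apply2] <;> assumption
    have hw : v 0 + v 1 ≠ 0 := by
      intro h; exact hv2 (by linarith)
    have hK : v 0 ^ 2 + v 0 * v 1 + v 1 ^ 2 = v 0 + v 1 := by
      linear_combination e2 / 2 + ((v 0 + v 1 - v 2 - 1) / 2) * e1
    refine ⟨-(v 0) / (v 0 + v 1), euclid_ext fun i => ?_⟩
    have hQw : (-(v 0) / (v 0 + v 1)) ^ 2 + (-(v 0) / (v 0 + v 1)) + 1 = 1 / (v 0 + v 1) := by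
      field_simp
      linear_combination hK
    fin_cases i
    · show Phi (-(v 0) / (v 0 + v 1)) 0 = v 0
      rw [Phi_apply0, hQw]
      field_simp
    · show Phi (-(v 0) / (v 0 + v 1)) 1 = v 1
      rw [Phi_apply1, hQw]
      field_simp
      ring
    · show Phi (-(v 0) / (v 0 + v 1)) 2 = v 2
      rw [Phi_apply2, hQw]
      rw [one_div, div_eq_iff (inv_ne_zero hw)]
      field_simp
      linear_combination hK - (v 0 + v 1) * e1

lemma Phi_continuous : Continuous Phi := by
  have h : Continuous fun t : ℝ => (![-t/(t^2+t+1), (1+t)/(t^2+t+1), (t^2+t)/(t^2+t+1)] : Fin 3 → ℝ) := by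
    apply continuous_pi
    intro i
    fin_cases i <;> simp <;>
      exact Continuous.div (by continuity) (by continuity) (fun t => (D_pos t).ne')
  exact (PiLp.continuousLinearEquiv 2 ℝ (fun _ : Fin 3 => ℝ)).symm.continuous.comp h

lemma dist_Phi (s t : ℝ) :
    dist (Phi s) (Phi t) = Real.sqrt 2 * |s - t| / (Real.sqrt (s^2+s+1) * Real.sqrt (t^2+t+1)) := by
  have hs := D_pos s
  have ht := D_pos t
  rw [EuclideanSpace.dist_eq]
  simp only [Real.dist_eq, sq_abs]
  have : ∑ i, (Phi s i - Phi t i)^2 = 2*(s-t)^2/((s^2+s+1)*(t^2+t+1)) := by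
    rw [Fin.sum_univ_three, Phi_apply0, Phi_apply1, Phi_apply2, Phi_apply0, Phi_apply1, Phi_apply2]
    have hs' : s * (s + 1) + 1 ≠ 0 := (by nlinarith : 0 < s * (s + 1) + 1).ne'
    have ht' : t * (t + 1) + 1 ≠ 0 := (by nlinarith : 0 < t * (t + 1) + 1).ne'
    field_simp
    ring
  rw [this]
  rw [show (2:ℝ)*(s-t)^2/((s^2+s+1)*(t^2+t+1)) = (Real.sqrt 2 * |s-t| / (Real.sqrt (s^2+s+1) * Real.sqrt (t^2+t+1)))^2 by
    rw [div_pow, mul_pow, mul_pow, Real.sq_sqrt (by norm_num), Real.sq_sqrt hs.le, Real.sq_sqrt ht.le, sq_abs]]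
  exact Real.sqrt_sq (by positivity)

lemma Phi_injective : Function.Injective Phi := by
  intro s t h
  have h2 : dist (Phi s) (Phi t) = 0 := by rw [h, dist_self]
  rw [dist_Phi] at h2
  have hs := Real.sqrt_pos.mpr (D_pos s)
  have ht := Real.sqrt_pos.mpr (D_pos t)
  rw [div_eq_zero_iff] at h2
  rcases h2 with h2 | h2
  · rcases mul_eq_zero.mp h2 with h4 | h4
    · exact absurd h4 (by positivity)
    · have h5 := abs_eq_zero.mp h4; linarith
  · exact absurd h2 (by positivity)

def Nr (r : ℚ) : ℤ := r.num^2 + r.num*r.den + r.den^2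

lemma Nr_pos (r : ℚ) : 0 < Nr r := by
  have h : 0 < (r.den : ℤ) := Int.natCast_pos.mpr r.pos
  unfold Nr
  nlinarith [sq_nonneg (2*r.num + r.den), sq_nonneg (r.den : ℤ)]

def rho (r : ℚ) : Fin 3 → ℚ :=
  ![((-(r.num*r.den) : ℤ) : ℚ) / ((Nr r : ℤ) : ℚ),
    (((r.den*(r.num+r.den)) : ℤ) : ℚ) / ((Nr r : ℤ) : ℚ),
    (((r.num*(r.num+r.den)) : ℤ) : ℚ) / ((Nr r : ℤ) : ℚ)]

def nmr (r : ℚ) : Fin 3 → ℤ :=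
  ![-(r.num*r.den), r.den*(r.num+r.den), r.num*(r.num+r.den)]

lemma rho_eq (r : ℚ) (i : Fin 3) : rho r i = ((nmr r i : ℤ) : ℚ) / ((Nr r : ℤ) : ℚ) := by
  fin_cases i <;> rfl

lemma Dq_pos (r : ℚ) : 0 < r^2 + r + 1 := by nlinarith [sq_nonneg (r+1), sq_nonneg r]

lemma Phi_rat_coord (r : ℚ) (i : Fin 3) : Phi (r : ℝ) i = ((rho r i : ℚ) : ℝ) := by
  have hden : ((r.den : ℤ) : ℚ) ≠ 0 := by exact_mod_cast r.den_nz
  have hN : ((Nr r : ℤ) : ℚ) ≠ 0 := by exact_mod_cast (Nr_pos r).ne'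
  have hD : ((r : ℝ)^2 + (r : ℝ) + 1) ≠ 0 := by exact_mod_cast (Dq_pos r).ne'
  have hnum : (r : ℚ) * r.den = r.num := by exact_mod_cast Rat.mul_den_eq_num r
  fin_cases i
  · show Phi (r : ℝ) 0 = ((rho r 0 : ℚ) : ℝ)
    rw [Phi_apply0, rho_eq]
    simp only [nmr, Matrix.cons_val_zero]
    push_cast [Nr]
    rw [div_eq_div_iff hD (by exact_mod_cast hN)]
    push_cast
    have h1 : (r : ℝ) * r.den = r.num := by exact_mod_cast hnum
    linear_combination ((r:ℝ)*r.num - r.den) * h1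
  · show Phi (r : ℝ) 1 = ((rho r 1 : ℚ) : ℝ)
    rw [Phi_apply1, rho_eq]
    simp only [nmr, Matrix.cons_val_one, Matrix.head_cons]
    push_cast [Nr]
    rw [div_eq_div_iff hD (by exact_mod_cast hN)]
    push_cast
    have h1 : (r : ℝ) * r.den = r.num := by exact_mod_cast hnum
    linear_combination (-(1+(r:ℝ))*((r.num:ℝ)+r.den) + (r.den:ℝ)) * h1
  · show Phi (r : ℝ) 2 = ((rho r 2 : ℚ) : ℝ)
    rw [Phi_apply2, rho_eq]
    simp only [nmr, Matrix.cons_val_two, Matrix.tail_cons, Matrix.head_cons]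
    push_cast [Nr]
    rw [div_eq_div_iff hD (by exact_mod_cast hN)]
    push_cast
    have h1 : (r : ℝ) * r.den = r.num := by exact_mod_cast hnum
    linear_combination ((r.num:ℝ) + ((r:ℝ)+1)*r.den) * h1

lemma Phi_rat_mem_ratPts (r : ℚ) : ∀ i, ∃ q : ℚ, Phi (r : ℝ) i = (q : ℝ) :=
  fun i => ⟨rho r i, Phi_rat_coord r i⟩

lemma rho_den_dvd (r : ℚ) (i : Fin 3) : ((rho r i).den : ℤ) ∣ Nr r := by
  rw [rho_eq, ← Rat.divInt_eq_div]
  exact Rat.den_dvd _ _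

lemma Nr_dvd_mul (r : ℚ) (i : Fin 3) : Nr r ∣ nmr r i * ((rho r i).den : ℤ) := by
  have hN : ((Nr r : ℤ) : ℚ) ≠ 0 := by exact_mod_cast (Nr_pos r).ne'
  have h1 : ((nmr r i : ℤ) : ℚ) * ((rho r i).den : ℚ) = ((rho r i).num : ℚ) * ((Nr r : ℤ) : ℚ) := by
    have h2 : ((nmr r i : ℤ) : ℚ) = rho r i * ((Nr r : ℤ) : ℚ) := by
      rw [rho_eq]; field_simp
    rw [h2, mul_right_comm, Rat.mul_den_eq_num]
  have h3 : nmr r i * ((rho r i).den : ℤ) = (rho r i).num * Nr r := by exact_mod_cast h1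
  exact ⟨(rho r i).num, by linarith [h3]⟩

lemma heightVec_Phi_rat (r : ℚ) : heightVec (Phi (r : ℝ)) = ((Nr r : ℤ) : ℝ) := by
  have h : ∀ i, ∃ q : ℚ, Phi (r : ℝ) i = (q : ℝ) := Phi_rat_mem_ratPts r
  rw [heightVec, dif_pos h]
  have hch : ∀ i : Fin 3, (h i).choose = rho r i := by
    intro i
    have h2 : (((h i).choose : ℚ) : ℝ) = ((rho r i : ℚ) : ℝ) := by
      rw [← (h i).choose_spec]; exact Phi_rat_coord r i
    exact_mod_cast h2
  have hlcm : (Finset.univ.lcm fun i => (h i).choose.den) = (Nr r).natAbs := by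
    apply Nat.dvd_antisymm
    · apply Finset.lcm_dvd
      intro i _
      rw [hch i]
      have h4 := Int.natAbs_dvd_natAbs.mpr (rho_den_dvd r i)
      simpa using h4
    · -- N ∣ lcm
      have hcop : IsCoprime (r.num) ((r.den : ℤ)) := by
        rw [Int.isCoprime_iff_gcd_eq_one]
        exact r.reduced
      obtain ⟨a, b, hab⟩ := (hcop.pow : IsCoprime (r.num ^ 2) ((r.den : ℤ) ^ 2))
      set d : ℤ := ((Finset.univ.lcm fun i => (h i).choose.den : ℕ) : ℤ) with hd
      have hdvd : ∀ i : Fin 3, Nr r ∣ nmr r i * d := by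
        intro i
        have h1 : ((rho r i).den : ℤ) ∣ d :=
          Int.natCast_dvd_natCast.mpr (by rw [← hch i]; exact Finset.dvd_lcm (Finset.mem_univ i))
        obtain ⟨k, hk⟩ := h1
        rw [hk, ← mul_assoc]
        exact Dvd.dvd.mul_right (Nr_dvd_mul r i) k
      have hp2 : r.num ^ 2 = Nr r - nmr r 1 := by
        simp [Nr, nmr]; ring
      have hq2 : (r.den : ℤ) ^ 2 = Nr r - nmr r 2 := by
        simp [Nr, nmr]; ring
      have hNd : Nr r ∣ d := by
        have h5 : d = a * (d * (Nr r - nmr r 1)) + b * (d * (Nr r - nmr r 2)) := by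
          rw [← hp2, ← hq2]; linear_combination (-d) * hab
        rw [h5]
        apply dvd_add
        · apply Dvd.dvd.mul_left
          rw [mul_sub]
          exact dvd_sub (Dvd.dvd.mul_left dvd_rfl d) (by rw [mul_comm]; exact hdvd 1)
        · apply Dvd.dvd.mul_left
          rw [mul_sub]
          exact dvd_sub (Dvd.dvd.mul_left dvd_rfl d) (by rw [mul_comm]; exact hdvd 2)
      have := Int.natAbs_dvd_natAbs.mpr hNd
      simpa [hd] using this
  rw [hlcm]
  have := (Nr_pos r).le
  simp [Nat.cast_natAbs, abs_of_nonneg this]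

lemma heightQ_rat (r : ℚ) : heightQ (r : ℝ) = (r.den : ℝ) ^ 2 := by
  have h : ∃ q : ℚ, (r : ℝ) = (q : ℝ) := ⟨r, rfl⟩
  rw [heightQ, dif_pos h]
  have : h.choose = r := by
    have h2 := h.choose_spec
    exact_mod_cast h2.symm
  rw [this]

lemma map_cofinite_of_inj_cofinite_range {α β : Type*} {e : α → β}
    (he : Function.Injective e) (hr : (Set.range e)ᶜ.Finite) :
    Filter.map e cofinite = cofinite := by
  apply le_antisymm
  · exact Function.Injective.tendsto_cofinite he
  · intro s hs
    rw [Filter.mem_map, Filter.mem_cofinite] at hs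
    rw [Filter.mem_cofinite]
    have hsub : sᶜ ⊆ e '' (e ⁻¹' s)ᶜ ∪ (Set.range e)ᶜ := by
      intro x hx
      by_cases hxr : x ∈ Set.range e
      · obtain ⟨y, rfl⟩ := hxr
        exact Or.inl ⟨y, hx, rfl⟩
      · exact Or.inr hxr
    exact ((hs.image e).union hr).subset hsub

lemma limsup_map_cofinite {α β : Type*} {e : α → β}
    (he : Function.Injective e) (hr : (Set.range e)ᶜ.Finite) (u : β → ℝ≥0∞) :
    limsup u cofinite = limsup (u ∘ e) cofinite := by
  rw [← map_cofinite_of_inj_cofinite_range he hr]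
  simp only [Filter.limsup_eq, Filter.eventually_map]
  rfl

lemma limsup_le_limsup_of_near_far (ξ : ℝ) (f g : ℚ → ℝ)
    (hnear : ∀ ε : ℝ, 0 < ε → ∃ δ : ℝ, 0 < δ ∧ ∀ r : ℚ, |ξ - r| < δ → f r ≤ (1+ε) * g r)
    (hfar : ∀ δ : ℝ, 0 < δ → ∀ η : ℝ, 0 < η → {r : ℚ | δ ≤ |ξ - r| ∧ η < f r}.Finite) :
    limsup (fun r => ENNReal.ofReal (f r)) cofinite ≤
      limsup (fun r => ENNReal.ofReal (g r)) cofinite := by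
  set L := limsup (fun r => ENNReal.ofReal (g r)) cofinite with hL
  rcases eq_or_ne L ⊤ with hT | hT
  · rw [hT]; exact le_top
  apply ENNReal.le_of_forall_pos_le_add
  intro η hη hLtop
  set l : ℝ := L.toReal with hl
  have hl0 : 0 ≤ l := ENNReal.toReal_nonneg
  set ε : ℝ := min 1 ((η : ℝ) / (l + 3)) with hε
  have hε0 : 0 < ε := by
    apply lt_min one_pos
    apply div_pos (by exact_mod_cast hη) (by linarith)
  have hLofReal : L = ENNReal.ofReal l := (ENNReal.ofReal_toReal hT).symm
  have hL' : L < ENNReal.ofReal (l + ε) := by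
    rw [hLofReal]
    exact (ENNReal.ofReal_lt_ofReal_iff (by linarith)).mpr (by linarith)
  obtain ⟨δ, hδ0, hδ⟩ := hnear ε hε0
  have hev1 : ∀ᶠ r : ℚ in cofinite, f r ≤ (1+ε) * g r ∨ f r ≤ ε := by
    rw [Filter.eventually_cofinite]
    apply Set.Finite.subset (hfar δ hδ0 ε hε0)
    intro r hr
    simp only [Set.mem_setOf_eq, not_or, not_le] at hr
    refine ⟨?_, hr.2⟩
    by_contra hcon
    push_neg at hcon
    exact absurd (hδ r hcon) (not_le.mpr hr.1)
  have hev2 : ∀ᶠ r : ℚ in cofinite, ENNReal.ofReal (g r) < ENNReal.ofReal (l + ε) :=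
    Filter.eventually_lt_of_limsup_lt hL'
  have hev : ∀ᶠ r : ℚ in cofinite,
      ENNReal.ofReal (f r) ≤ ENNReal.ofReal ((1+ε) * (l+ε) + ε) := by
    filter_upwards [hev1, hev2] with r h1 h2
    rcases h1 with h1 | h1
    · calc ENNReal.ofReal (f r) ≤ ENNReal.ofReal ((1+ε) * g r) := ENNReal.ofReal_le_ofReal h1
        _ = ENNReal.ofReal (1+ε) * ENNReal.ofReal (g r) := ENNReal.ofReal_mul (by linarith)
        _ ≤ ENNReal.ofReal (1+ε) * ENNReal.ofReal (l+ε) := by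
            exact mul_le_mul_right h2.le _
        _ = ENNReal.ofReal ((1+ε) * (l+ε)) := (ENNReal.ofReal_mul (by linarith)).symm
        _ ≤ ENNReal.ofReal ((1+ε) * (l+ε) + ε) := ENNReal.ofReal_le_ofReal (by linarith)
    · exact ENNReal.ofReal_le_ofReal (by nlinarith)
  have hlim : limsup (fun r => ENNReal.ofReal (f r)) cofinite ≤
      ENNReal.ofReal ((1+ε) * (l+ε) + ε) := limsup_le_of_le (by isBoundedDefault) hev
  refine le_trans hlim ?_
  have hεle : ε ≤ (η : ℝ) / (l + 3) := min_le_right _ _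
  have hε1 : ε ≤ 1 := min_le_left _ _
  have hstep : (1+ε) * (l+ε) + ε ≤ l + (η : ℝ) := by
    have h6 : ε * (l + 3) ≤ (η : ℝ) := by
      rw [← div_mul_cancel₀ (η : ℝ) (show (l+3 : ℝ) ≠ 0 by linarith)]
      exact mul_le_mul_of_nonneg_right hεle (by linarith)
    nlinarith
  calc ENNReal.ofReal ((1+ε) * (l+ε) + ε) ≤ ENNReal.ofReal (l + (η:ℝ)) :=
        ENNReal.ofReal_le_ofReal hstep
    _ ≤ ENNReal.ofReal l + ENNReal.ofReal (η:ℝ) := ENNReal.ofReal_add_le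
    _ = L + (η : ℝ≥0∞) := by rw [← hLofReal, ENNReal.ofReal_coe_nnreal]

lemma far_finite (ξ : ℝ) (δ : ℝ) (hδ : 0 < δ) (η : ℝ) (hη : 0 < η) :
    {r : ℚ | δ ≤ |ξ - r| ∧ η < 1 / ((r.den : ℝ)^2 * |ξ - r|)}.Finite := by
  set K : ℕ := ⌈Real.sqrt (1/(η*δ))⌉₊ with hK
  set C : ℤ := ⌈(|ξ| + 1/η) * K⌉ with hC
  have hsub : {r : ℚ | δ ≤ |ξ - r| ∧ η < 1 / ((r.den : ℝ)^2 * |ξ - r|)} ⊆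
      (fun r : ℚ => (r.num, r.den)) ⁻¹' (Set.Icc (-C) C ×ˢ Set.Icc 0 K) := by
    rintro r ⟨h1, h2⟩
    have hden0 : (0:ℝ) < (r.den : ℝ) := by exact_mod_cast r.pos
    have habs : 0 < |ξ - (r:ℝ)| := lt_of_lt_of_le hδ h1
    have hX : (0:ℝ) < (r.den:ℝ)^2 * |ξ - (r:ℝ)| := by positivity
    have hprod : (r.den : ℝ)^2 * |ξ - (r:ℝ)| < 1/η := by
      rw [lt_div_iff₀ hη]
      have h3 := (lt_div_iff₀ hX).mp h2
      nlinarith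
    have hden1 : (1:ℝ) ≤ (r.den : ℝ) := by exact_mod_cast r.pos
    have hden2 : (r.den:ℝ)^2 ≤ 1/(η*δ) := by
      rw [le_div_iff₀ (by positivity)]
      have e1 : (1/η)*η = 1 := by field_simp
      nlinarith [mul_lt_mul_of_pos_right hprod hη,
        mul_le_mul_of_nonneg_left h1 (by positivity : (0:ℝ) ≤ (r.den:ℝ)^2 * η)]
    have hdenK : r.den ≤ K := by
      have h4 : (r.den:ℝ) ≤ Real.sqrt (1/(η*δ)) := by
        rw [show ((r.den:ℝ)) = Real.sqrt ((r.den:ℝ)^2) by rw [Real.sqrt_sq hden0.le]]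
        exact Real.sqrt_le_sqrt hden2
      have h5 : (r.den:ℝ) ≤ (K:ℝ) := le_trans h4 (by rw [hK]; exact Nat.le_ceil _)
      exact_mod_cast h5
    have hfar : |ξ - (r:ℝ)| < 1/η := by
      have h11 : (1:ℝ) ≤ (r.den:ℝ)^2 := by nlinarith
      nlinarith [mul_le_mul_of_nonneg_right h11 habs.le]
    have hr : |(r:ℝ)| ≤ |ξ| + 1/η := by
      have := abs_sub_abs_le_abs_sub (r:ℝ) ξ
      rw [abs_sub_comm] at this
      linarith [this, hfar]
    have hnum : |(r.num : ℝ)| ≤ (|ξ| + 1/η) * K := by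
      have h6 : |(r.num : ℝ)| = |(r:ℝ)| * r.den := by
        rw [Rat.cast_def, abs_div, abs_of_pos hden0,
          div_mul_cancel₀ _ hden0.ne']
      rw [h6]
      have h7 : (r.den : ℝ) ≤ (K:ℝ) := by exact_mod_cast hdenK
      have h8 : (0:ℝ) ≤ |ξ| + 1/η := by positivity
      nlinarith [abs_nonneg ((r:ℝ))]
    have hnumC : -C ≤ r.num ∧ r.num ≤ C := by
      have h9 : |(r.num : ℝ)| ≤ (C : ℝ) := le_trans hnum (by rw [hC]; exact Int.le_ceil _)
      have h10 : |r.num| ≤ C := by exact_mod_cast (by rwa [← Int.cast_abs] at h9 : ((|r.num| : ℤ) : ℝ) ≤ (C:ℝ))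
      exact abs_le.mp h10
    exact ⟨⟨hnumC.1, hnumC.2⟩, ⟨Nat.zero_le _, hdenK⟩⟩
  apply Set.Finite.subset _ hsub
  apply Set.Finite.preimage
  · apply Set.injOn_of_injective
    intro a b h
    exact Rat.ext (congrArg Prod.fst h) (congrArg Prod.snd h)
  · exact (Set.finite_Icc _ _).prod (Set.finite_Icc _ _)

lemma nPt_ratPts : nPt ∈ ratPts 3 := by
  intro i
  fin_cases i
  · exact ⟨0, by show nPt 0 = _; rw [nPt_apply0]; norm_num⟩
  · exact ⟨0, by show nPt 1 = _; rw [nPt_apply1]; norm_num⟩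
  · exact ⟨1, by show nPt 2 = _; rw [nPt_apply2]; norm_num⟩

lemma image_ratQ : Phi '' ratQ = (S1III ∩ ratPts 3) \ {nPt} := by
  apply Set.eq_of_subset_of_subset
  · rintro _ ⟨x, ⟨q, rfl⟩, rfl⟩
    exact ⟨⟨Phi_mem _, Phi_rat_mem_ratPts q⟩, Phi_ne_nPt _⟩
  · rintro v ⟨⟨hS, hrat⟩, hne⟩
    obtain ⟨t, rfl⟩ : v ∈ Set.range Phi := by rw [range_Phi]; exact ⟨hS, hne⟩
    have hD : (t^2+t+1) ≠ 0 := (D_pos t).ne'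
    obtain ⟨q0, hq0⟩ := hrat 0
    obtain ⟨q1, hq1⟩ := hrat 1
    have hsum : Phi t 0 + Phi t 1 = 1/(t^2+t+1) := by
      rw [Phi_apply0, Phi_apply1, ← add_div]
      congr 1
      ring
    have hsumne : ((q0 : ℝ) + (q1 : ℝ)) ≠ 0 := by
      rw [← hq0, ← hq1, hsum]
      positivity
    have hq01 : (q0 + q1 : ℚ) ≠ 0 := by
      intro h
      apply hsumne
      exact_mod_cast congrArg (fun x : ℚ => (x : ℝ)) h
    have ht : t = ((-q0/(q0+q1) : ℚ) : ℝ) := by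
      push_cast
      rw [← hq0, ← hq1, hsum, Phi_apply0]
      have hD' : t * (t + 1) + 1 ≠ 0 := (by nlinarith [D_pos t] : 0 < t * (t + 1) + 1).ne'
      field_simp
    exact ⟨t, ⟨_, ht⟩, rfl⟩

lemma Nr_cast_real (ξ : ℝ) (r : ℚ) :
    ((Nr r : ℤ) : ℝ) = (r.den:ℝ)^2 * ((r:ℝ)^2+(r:ℝ)+1) := by
  have h1 : (r : ℝ) * r.den = r.num := by exact_mod_cast Rat.mul_den_eq_num r
  push_cast [Nr]
  linear_combination (-((r.num:ℝ) + (r:ℝ)*r.den + r.den)) * h1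

lemma sqrt2_b_eq (ξ : ℝ) (hirr : ∀ q : ℚ, ξ ≠ (q : ℝ)) (r : ℚ) :
    Real.sqrt 2 * (1/(((Nr r : ℤ):ℝ) * dist (Phi ξ) (Phi (r:ℝ)))) =
      (1/((r.den:ℝ)^2 * |ξ - (r:ℝ)|)) *
        (Real.sqrt (ξ^2+ξ+1) / Real.sqrt ((r:ℝ)^2+(r:ℝ)+1)) := by
  have habs : 0 < |ξ - (r:ℝ)| := abs_pos.mpr (sub_ne_zero.mpr (hirr r))
  have hsξ : 0 < Real.sqrt (ξ^2+ξ+1) := Real.sqrt_pos.mpr (D_pos ξ)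
  have hsr : 0 < Real.sqrt ((r:ℝ)^2+(r:ℝ)+1) := Real.sqrt_pos.mpr (D_pos (r:ℝ))
  have hs2 : 0 < Real.sqrt 2 := Real.sqrt_pos.mpr (by norm_num)
  have hden : (0:ℝ) < (r.den:ℝ) := by exact_mod_cast r.pos
  have hsr2 : Real.sqrt ((r:ℝ)^2+(r:ℝ)+1) ^ 2 = (r:ℝ)^2+(r:ℝ)+1 :=
    Real.sq_sqrt (D_pos (r:ℝ)).le
  rw [dist_Phi, Nr_cast_real ξ r, ← hsr2]
  rw [Real.sqrt_sq hsr.le]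
  field_simp

lemma c_near (ξ : ℝ) :
    ∀ ε : ℝ, 0 < ε → ∃ δ : ℝ, 0 < δ ∧ ∀ r : ℚ, |ξ - (r:ℝ)| < δ →
      |Real.sqrt (ξ^2+ξ+1) / Real.sqrt ((r:ℝ)^2+(r:ℝ)+1) - 1| ≤ ε := by
  intro ε hε
  have hcont : ContinuousAt (fun t : ℝ => Real.sqrt (ξ^2+ξ+1) / Real.sqrt (t^2+t+1)) ξ := by
    apply ContinuousAt.div continuousAt_const
    · exact (Real.continuous_sqrt.comp (by continuity)).continuousAt
    · exact (Real.sqrt_pos.mpr (D_pos ξ)).ne'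
  rw [Metric.continuousAt_iff] at hcont
  obtain ⟨δ, hδ0, hδ⟩ := hcont ε hε
  refine ⟨δ, hδ0, fun r hr => ?_⟩
  have h1 : dist ((r:ℝ)) ξ < δ := by
    rw [Real.dist_eq, abs_sub_comm]; exact hr
  have h2 := hδ h1
  rw [Real.dist_eq] at h2
  have h3 : Real.sqrt (ξ^2+ξ+1) / Real.sqrt (ξ^2+ξ+1) = 1 :=
    div_self (Real.sqrt_pos.mpr (D_pos ξ)).ne'
  rw [h3] at h2
  exact h2.le

lemma c_le_M (ξ : ℝ) (r : ℚ) :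
    Real.sqrt (ξ^2+ξ+1) / Real.sqrt ((r:ℝ)^2+(r:ℝ)+1) ≤
      Real.sqrt (ξ^2+ξ+1) / Real.sqrt (3/4) := by
  apply div_le_div_of_nonneg_left (Real.sqrt_nonneg _) (Real.sqrt_pos.mpr (by norm_num))
  apply Real.sqrt_le_sqrt
  nlinarith [sq_nonneg ((r:ℝ) + 1/2)]

lemma main_limsup (ξ : ℝ) (hirr : ∀ q : ℚ, ξ ≠ (q : ℝ)) :
    limsup (fun r : ℚ => ENNReal.ofReal (1/((r.den:ℝ)^2 * |ξ - (r:ℝ)|))) cofinite =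
      ENNReal.ofReal (Real.sqrt 2) *
        limsup (fun r : ℚ =>
          ENNReal.ofReal (1/(((Nr r : ℤ):ℝ) * dist (Phi ξ) (Phi (r:ℝ))))) cofinite := by
  set a : ℚ → ℝ := fun r => 1/((r.den:ℝ)^2 * |ξ - (r:ℝ)|) with ha
  set c : ℚ → ℝ := fun r => Real.sqrt (ξ^2+ξ+1) / Real.sqrt ((r:ℝ)^2+(r:ℝ)+1) with hc
  have ha0 : ∀ r, 0 ≤ a r := fun r => by positivity
  have hc0 : ∀ r, 0 < c r := fun r => by
    exact div_pos (Real.sqrt_pos.mpr (D_pos ξ)) (Real.sqrt_pos.mpr (D_pos (r:ℝ)))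
  have hrhs : ENNReal.ofReal (Real.sqrt 2) *
      limsup (fun r : ℚ =>
        ENNReal.ofReal (1/(((Nr r : ℤ):ℝ) * dist (Phi ξ) (Phi (r:ℝ))))) cofinite =
      limsup (fun r : ℚ => ENNReal.ofReal (a r * c r)) cofinite := by
    rw [← ENNReal.limsup_const_mul_of_ne_top ENNReal.ofReal_ne_top]
    apply Filter.limsup_congr
    apply Filter.Eventually.of_forall
    intro r
    rw [← ENNReal.ofReal_mul (Real.sqrt_nonneg 2), sqrt2_b_eq ξ hirr r]
  rw [hrhs]
  apply le_antisymm
  · -- limsup a ≤ limsup (a * c)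
    apply limsup_le_limsup_of_near_far ξ a (fun r => a r * c r)
    · intro ε hε
      obtain ⟨δ, hδ0, hδ⟩ := c_near ξ (ε/(1+ε)) (by positivity)
      refine ⟨δ, hδ0, fun r hr => ?_⟩
      have h1 := hδ r hr
      have h2 : 1/(1+ε) ≤ c r := by
        rw [abs_le] at h1
        rw [div_le_iff₀ (by linarith : (0:ℝ) < 1+ε)]
        have : (1 - ε/(1+ε)) * (1+ε) = 1 := by field_simp; ring
        nlinarith [h1.1]
      have h3 := ha0 r
      have h5 : 1 ≤ c r * (1+ε) := (div_le_iff₀ (by linarith : (0:ℝ) < 1+ε)).mp h2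
      nlinarith [mul_le_mul_of_nonneg_left h5 h3]
    · intro δ hδ0 η hη
      exact far_finite ξ δ hδ0 η hη
  · -- limsup (a*c) ≤ limsup a
    apply limsup_le_limsup_of_near_far ξ (fun r => a r * c r) a
    · intro ε hε
      obtain ⟨δ, hδ0, hδ⟩ := c_near ξ ε hε
      refine ⟨δ, hδ0, fun r hr => ?_⟩
      have h1 := hδ r hr
      rw [abs_le] at h1
      nlinarith [ha0 r, h1.2]
    · intro δ hδ0 η hη
      set M : ℝ := Real.sqrt (ξ^2+ξ+1) / Real.sqrt (3/4) with hM
      have hM0 : 0 < M := div_pos (Real.sqrt_pos.mpr (D_pos ξ)) (Real.sqrt_pos.mpr (by norm_num))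
      apply Set.Finite.subset (far_finite ξ δ hδ0 (η/M) (by positivity))
      rintro r ⟨h1, h2⟩
      refine ⟨h1, ?_⟩
      rw [div_lt_iff₀ hM0]
      calc η < a r * c r := h2
        _ ≤ a r * M := mul_le_mul_of_nonneg_left (c_le_M ξ r) (ha0 r)

theorem lagrange_S1III :
    ∃ n ∈ S1III ∩ ratPts 3, ∃ Φ : ℝ → EuclideanSpace ℝ (Fin 3),
      Continuous Φ ∧ Function.Injective Φ ∧ Set.range Φ = S1III \ {n} ∧
      Φ '' ratQ = (S1III ∩ ratPts 3) \ {n} ∧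
      ∀ ξ : ℝ, ξ ∉ ratQ →
        lagrangeNumber ratQ heightQ ξ =
          ENNReal.ofReal (Real.sqrt 2) *
            lagrangeNumber (S1III ∩ ratPts 3) heightVec (Φ ξ) := by
  refine ⟨nPt, ⟨nPt_mem, nPt_ratPts⟩, Phi, Phi_continuous, Phi_injective, range_Phi,
    image_ratQ, ?_⟩
  intro ξ hξ
  have hirr : ∀ q : ℚ, ξ ≠ (q : ℝ) := fun q h => hξ ⟨q, h⟩
  -- left side
  have hleft : lagrangeNumber ratQ heightQ ξ =
      limsup (fun r : ℚ => ENNReal.ofReal (1/((r.den:ℝ)^2 * |ξ - (r:ℝ)|))) cofinite := by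
    rw [lagrangeNumber]
    have he : Function.Injective (fun r : ℚ => (⟨(r:ℝ), ⟨r, rfl⟩⟩ : ratQ)) := by
      intro x y h
      have : (x : ℝ) = (y : ℝ) := congrArg Subtype.val h
      exact_mod_cast this
    have hrange : (Set.range (fun r : ℚ => (⟨(r:ℝ), ⟨r, rfl⟩⟩ : ratQ)))ᶜ.Finite := by
      apply Set.Finite.subset (Set.finite_empty)
      intro z hz
      obtain ⟨q, hq⟩ := z.2
      exact absurd ⟨q, Subtype.ext hq.symm⟩ hz
    rw [limsup_map_cofinite he hrange]
    apply Filter.limsup_congr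
    apply Filter.Eventually.of_forall
    intro r
    show ENNReal.ofReal (1 / (heightQ (r:ℝ) * dist ξ ((r:ℝ)))) = _
    rw [heightQ_rat, Real.dist_eq]
  -- right side
  have hright : lagrangeNumber (S1III ∩ ratPts 3) heightVec (Phi ξ) =
      limsup (fun r : ℚ =>
        ENNReal.ofReal (1/(((Nr r : ℤ):ℝ) * dist (Phi ξ) (Phi (r:ℝ))))) cofinite := by
    rw [lagrangeNumber]
    set e : ℚ → ↥(S1III ∩ ratPts 3) :=
      fun r => ⟨Phi (r:ℝ), ⟨Phi_mem _, Phi_rat_mem_ratPts r⟩⟩ with hedef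
    have he : Function.Injective e := by
      intro x y h
      have h1 : Phi (x:ℝ) = Phi (y:ℝ) := congrArg Subtype.val h
      have h2 : (x:ℝ) = (y:ℝ) := Phi_injective h1
      exact_mod_cast h2
    have hrange : (Set.range e)ᶜ.Finite := by
      apply Set.Finite.subset (Set.finite_singleton
        (⟨nPt, ⟨nPt_mem, nPt_ratPts⟩⟩ : ↥(S1III ∩ ratPts 3)))
      intro z hz
      simp only [Set.mem_singleton_iff]
      by_contra hne
      apply hz
      have hz1 : (z : EuclideanSpace ℝ (Fin 3)) ∈ (S1III ∩ ratPts 3) \ {nPt} := by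
        refine ⟨z.2, ?_⟩
        intro h
        exact hne (Subtype.ext h)
      rw [← image_ratQ] at hz1
      obtain ⟨x, ⟨q, rfl⟩, hx⟩ := hz1
      exact ⟨q, Subtype.ext hx⟩
    rw [limsup_map_cofinite he hrange]
    apply Filter.limsup_congr
    apply Filter.Eventually.of_forall
    intro r
    show ENNReal.ofReal (1 / (heightVec (Phi (r:ℝ)) * dist (Phi ξ) (Phi (r:ℝ)))) = _
    rw [heightVec_Phi_rat]
  rw [hleft, hright]
  exact main_limsup ξ hirr
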